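/- Let ι be an index set, let C ⊆ ℝ̄^ι be a complete convex set, and let y ∈ ℝ̄^ι. Set ν_C(y) := sup over v ∈ C of min(v∖y, 0) and Q_C(y) := componentwise sup over v ∈ C of (v + min(v∖y, 0)). Then: (1) Q_C(y) belongs to Down(C), satisfies Q_C(y) ≤ y, and z ≤ Q_C(y) for every z ∈ Down(C) with z ≤ y (i.e., Q_C(y) is the greatest element of Down(C) below y); (2) if y ∈ Up(C), then Q_C(y) ∈ C, Q_C(y) is the greatest element of C below y, and ν_C(y) = 0; (3) if ν_C(y) ∈ ℝ, then the vector Q_C(y) + (−ν_C(y)) belongs to C. -/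

import Mathlib

noncomputable section

variable {ι : Type}

/-- the residuated quotient `a∖b = sup {λ ∈ ℝ̄ : a + λ ≤ b}` in `ℝ̄`. -/
def eSub (a b : EReal) : EReal := sSup {l : EReal | a + l ≤ b}

/-- `v∖y = inf_i (v_i ∖ y_i)` for vectors `v, y ∈ ℝ̄^ι`. -/
def vSub (v y : ι → EReal) : EReal := ⨅ i, eSub (v i) (y i)

/-- complete (max-plus) convexity for subsets of `ℝ̄^ι`: stability under
arbitrary max-plus convex combinations. -/
def CompleteConvex (C : Set (ι → EReal)) : Prop :=
  ∀ (L : Type) (x : L → ι → EReal) (a : L → EReal),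
    (∀ l, x l ∈ C) → (⨆ l, a l) = 0 → (fun i => ⨆ l, x l i + a l) ∈ C

/-- the shadow `Down(C)`: all componentwise sups of families `{x_ℓ + λ_ℓ}` with
`x_ℓ ∈ C` and `λ_ℓ ≤ 0`. -/
def Down (C : Set (ι → EReal)) : Set (ι → EReal) :=
  {z | ∃ (L : Type) (x : L → ι → EReal) (lam : L → EReal),
    (∀ l, x l ∈ C) ∧ (∀ l, lam l ≤ 0) ∧ z = fun i => ⨆ l, x l i + lam l}

/-- the upper set `Up(C)` generated by `C`. -/
def Up (C : Set (ι → EReal)) : Set (ι → EReal) := {z | ∃ v ∈ C, v ≤ z}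

lemma add_eSub_le (a b : EReal) : a + eSub a b ≤ b := by
  induction a with
  | bot => simp
  | top =>
    rcases eq_or_ne b ⊤ with rfl | hb
    · exact le_top
    · have h : eSub ⊤ b = ⊥ := by
        refine le_bot_iff.mp (sSup_le fun l hl => ?_)
        by_contra hl'
        have hlb : l ≠ ⊥ := fun h => hl' (h ▸ le_rfl)
        simp only [Set.mem_setOf_eq] at hl
        rw [EReal.top_add_of_ne_bot hlb] at hl
        exact hb (top_le_iff.mp hl)
      rw [h]; simp
  | coe a =>
    have hset : {l : EReal | (a : EReal) + l ≤ b} = Set.Iic (b - (a : EReal)) := by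
      ext l
      simp only [Set.mem_setOf_eq, Set.mem_Iic]
      rw [EReal.le_sub_iff_add_le (Or.inl (EReal.coe_ne_bot a))
        (Or.inl (EReal.coe_ne_top a)), add_comm]
    rw [eSub, hset]
    have h1 : sSup (Set.Iic (b - (a : EReal))) ≤ b - (a : EReal) :=
      sSup_le fun _ h => h
    calc (a : EReal) + sSup (Set.Iic (b - (a : EReal)))
        ≤ (a : EReal) + (b - (a : EReal)) := add_le_add_right h1 _
      _ = (b - (a : EReal)) + (a : EReal) := add_comm _ _
      _ ≤ b := EReal.add_le_of_le_sub le_rfl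

lemma le_eSub_iff {a b l : EReal} : l ≤ eSub a b ↔ a + l ≤ b :=
  ⟨fun h => le_trans (add_le_add_right h a) (add_eSub_le a b), fun h => le_sSup h⟩

lemma le_vSub_iff {v y : ι → EReal} {l : EReal} : l ≤ vSub v y ↔ ∀ i, v i + l ≤ y i := by
  simp only [vSub, le_iInf_iff, le_eSub_iff]

lemma iSup_add_coe {α : Type} (f : α → EReal) (c : ℝ) :
    (⨆ l, f l + (c : EReal)) = (⨆ l, f l) + (c : EReal) := by
  apply le_antisymm
  · exact iSup_le fun l => add_le_add_left (le_iSup f l) _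
  · rw [← EReal.le_sub_iff_add_le (Or.inl (EReal.coe_ne_bot c))
      (Or.inl (EReal.coe_ne_top c))]
    refine iSup_le fun l => ?_
    rw [EReal.le_sub_iff_add_le (Or.inl (EReal.coe_ne_bot c))
      (Or.inl (EReal.coe_ne_top c))]
    exact le_iSup (fun l => f l + (c : EReal)) l

/-- **Geometric interpretation of `Q_C(y)` and `ν_C(y)`: `Q_C(y)` is the
projection onto `Down(C)`, it projects `Up(C)` onto `C`, and when `ν_C(y)` is
real, `Q_C(y) + (-ν_C(y)) ∈ C`.** -/
theorem stmt3 (C : Set (ι → EReal)) (hC : CompleteConvex C) (y : ι → EReal)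
    (ν : EReal) (Q : ι → EReal)
    (hν : ν = ⨆ v : C, min (vSub (v : ι → EReal) y) 0)
    (hQ : ∀ i, Q i = ⨆ v : C, ((v : ι → EReal) i + min (vSub (v : ι → EReal) y) 0)) :
    (Q ∈ Down C ∧ Q ≤ y ∧ ∀ z ∈ Down C, z ≤ y → z ≤ Q) ∧
    (y ∈ Up C → Q ∈ C ∧ Q ≤ y ∧ (∀ z ∈ C, z ≤ y → z ≤ Q) ∧ ν = 0) ∧
    (ν ≠ ⊥ → ν ≠ ⊤ → (fun i => Q i + (-ν)) ∈ C) := by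
  set m : C → EReal := fun v => min (vSub (v : ι → EReal) y) 0 with hm
  have hQeq : Q = fun i => ⨆ v : C, ((v : ι → EReal) i + m v) := funext hQ
  -- Q ≤ y
  have hQy : Q ≤ y := by
    intro i
    rw [hQ i]
    refine iSup_le fun v => ?_
    have h1 : m v ≤ vSub (v : ι → EReal) y := min_le_left _ _
    have h2 : (v : ι → EReal) i + vSub (v : ι → EReal) y ≤ y i :=
      le_vSub_iff.mp (le_refl (vSub (v : ι → EReal) y)) i
    exact le_trans (add_le_add_right h1 _) h2
  -- greatest element of Down C below y
  have hgreat : ∀ z ∈ Down C, z ≤ y → z ≤ Q := by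
    rintro z ⟨L, x, lam, hx, hlam, rfl⟩ hzy
    intro i
    refine iSup_le fun l => ?_
    have h1 : lam l ≤ vSub (x l) y := by
      rw [le_vSub_iff]
      intro j
      exact le_trans (le_iSup (fun l => x l j + lam l) l) (hzy j)
    have h2 : lam l ≤ m ⟨x l, hx l⟩ := le_min h1 (hlam l)
    calc x l i + lam l ≤ x l i + m ⟨x l, hx l⟩ := add_le_add_right h2 _
      _ ≤ ⨆ v : C, ((v : ι → EReal) i + m v) :=
        le_iSup (fun v : C => (v : ι → EReal) i + m v) ⟨x l, hx l⟩
      _ = Q i := (hQ i).symm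
  have hQdown : Q ∈ Down C :=
    ⟨C, Subtype.val, m, fun v => v.2, fun v => min_le_right _ _, hQeq⟩
  have hνle : ν ≤ 0 := hν ▸ iSup_le fun v => min_le_right _ _
  refine ⟨⟨hQdown, hQy, hgreat⟩, ?_, ?_⟩
  · rintro ⟨v0, hv0, hv0y⟩
    have hv0' : (0 : EReal) ≤ vSub v0 y := by
      rw [le_vSub_iff]; intro i; simpa using hv0y i
    have hν0 : ν = 0 := by
      refine le_antisymm hνle ?_
      rw [hν]
      have : m ⟨v0, hv0⟩ = 0 := min_eq_right hv0'
      calc (0 : EReal) = m ⟨v0, hv0⟩ := this.symm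
        _ ≤ ⨆ v : C, m v := le_iSup m ⟨v0, hv0⟩
    have hQC : Q ∈ C := by
      rw [hQeq]
      exact hC C Subtype.val m (fun v => v.2) (hν0 ▸ hν.symm)
    exact ⟨hQC, hQy, fun z hz hzy => hgreat z ⟨PUnit, fun _ => z,
      fun _ => 0, fun _ => hz, fun _ => le_rfl, funext fun i => by simp⟩ hzy, hν0⟩
  · intro hbot htop
    lift ν to ℝ using ⟨htop, hbot⟩ with r hr
    have hsup : (⨆ v : C, (m v + ((-r : ℝ) : EReal))) = 0 := by
      rw [iSup_add_coe, ← hν]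
      norm_cast
      simp
    have hmem := hC C Subtype.val (fun v => m v + ((-r : ℝ) : EReal))
      (fun v => v.2) hsup
    have heq : (fun i => ⨆ v : C, ((v : ι → EReal) i + (m v + ((-r : ℝ) : EReal))))
        = fun i => Q i + (-(r : EReal)) := by
      funext i
      rw [hQ i]
      rw [show (-(r : EReal)) = ((-r : ℝ) : EReal) by norm_cast]
      rw [← iSup_add_coe]
      congr 1
      funext v
      rw [add_assoc]
    rw [← heq]
    exact hmem

end
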